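/- For all integers n ≥ 2 and i ≥ 1, the Jacobsthal numbers satisfy J_{ni+i} = j_i^{n−1} · J_{2i} − (−2)^i · Σ_{k=1}^{n−1} j_i^{n−1−k} · J_{ik}, where j denotes the Jacobsthal–Lucas numbers. -/

import Mathlib

lemma J_closed (J : ℕ → ℤ) (hJ0 : J 0 = 0) (hJ1 : J 1 = 1)
    (hJ : ∀ n : ℕ, J (n + 2) = J (n + 1) + 2 * J n) :
    ∀ n, 3 * J n = 2 ^ n - (-1) ^ n := by
  intro n
  induction n using Nat.twoStepInduction with
  | zero => simp [hJ0]
  | one => simp [hJ1]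
  | more n ih1 ih2 =>
    rw [hJ]
    have h : 3 * (J (n+1) + 2 * J n) = 3 * J (n+1) + 2 * (3 * J n) := by ring
    rw [h, ih1, ih2]; ring

lemma jl_closed (jl : ℕ → ℤ) (hj0 : jl 0 = 2) (hj1 : jl 1 = 1)
    (hj : ∀ n : ℕ, jl (n + 2) = jl (n + 1) + 2 * jl n) :
    ∀ n, jl n = 2 ^ n + (-1) ^ n := by
  intro n
  induction n using Nat.twoStepInduction with
  | zero => simp [hj0]
  | one => simp [hj1]
  | more n ih1 ih2 => rw [hj, ih1, ih2]; ring

lemma key (J jl : ℕ → ℤ) (hJ0 : J 0 = 0) (hJ1 : J 1 = 1)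
    (hJ : ∀ n : ℕ, J (n + 2) = J (n + 1) + 2 * J n)
    (hj0 : jl 0 = 2) (hj1 : jl 1 = 1)
    (hj : ∀ n : ℕ, jl (n + 2) = jl (n + 1) + 2 * jl n)
    (m i : ℕ) : J (m + i + i) = jl i * J (m + i) - (-2) ^ i * J m := by
  have hc := J_closed J hJ0 hJ1 hJ
  have hjc := jl_closed jl hj0 hj1 hj
  have e : ((-2):ℤ) ^ i = (-1:ℤ) ^ i * 2 ^ i := by
    rw [show ((-2):ℤ) = (-1) * 2 by ring, mul_pow]
  have h3 : (3:ℤ) * (jl i * J (m + i) - (-2) ^ i * J m)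
      = jl i * (3 * J (m + i)) - (-2) ^ i * (3 * J m) := by ring
  have h : 3 * J (m + i + i) = 3 * (jl i * J (m + i) - (-2) ^ i * J m) := by
    rw [h3, hc, hc, hc, hjc, e]
    simp only [pow_add]
    ring
  linarith

theorem jacobsthal_sum (J jl : ℕ → ℤ)
    (hJ0 : J 0 = 0) (hJ1 : J 1 = 1)
    (hJ : ∀ n : ℕ, J (n + 2) = J (n + 1) + 2 * J n)
    (hj0 : jl 0 = 2) (hj1 : jl 1 = 1)
    (hj : ∀ n : ℕ, jl (n + 2) = jl (n + 1) + 2 * jl n)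
    (n i : ℕ) (hn : 2 ≤ n) (hi : 1 ≤ i) :
    J (n * i + i) = jl i ^ (n - 1) * J (2 * i) -
      (-2 : ℤ) ^ i * ∑ k ∈ Finset.Icc 1 (n - 1), jl i ^ (n - 1 - k) * J (i * k) := by
  have hkey := key J jl hJ0 hJ1 hJ hj0 hj1 hj
  induction n, hn using Nat.le_induction with
  | base =>
    simp only [show (2:ℕ) - 1 = 1 from rfl, Finset.Icc_self, Finset.sum_singleton]
    have h := hkey i i
    simp only [show i + i + i = 2 * i + i by ring, show i + i = 2 * i by ring] at h
    rw [h]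
    ring_nf
  | succ n hn ih =>
    have h1 : (n + 1) * i + i = n * i + i + i := by ring
    rw [h1, hkey (n * i) i, ih]
    obtain ⟨m, rfl⟩ : ∃ m, n = m + 1 := ⟨n - 1, by omega⟩
    simp only [Nat.add_sub_cancel]
    rw [Finset.sum_Icc_succ_top (by omega : 1 ≤ m + 1)]
    have hs : jl i * ∑ k ∈ Finset.Icc 1 m, jl i ^ (m - k) * J (i * k)
        = ∑ k ∈ Finset.Icc 1 m, jl i ^ (m + 1 - k) * J (i * k) := by
      rw [Finset.mul_sum]
      refine Finset.sum_congr rfl fun k hk => ?_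
      rw [Finset.mem_Icc] at hk
      rw [show m + 1 - k = (m - k) + 1 by omega, pow_succ]
      ring
    rw [← hs, show m + 1 - (m + 1) = 0 by omega, pow_zero, one_mul,
      show i * (m + 1) = (m + 1) * i by ring, pow_succ]
    ring
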